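/- Let c : ℝ² → Fin 2 be the parallel-stripes 2-coloring defined by c(x, y) = (⌊y / (√3/2)⌋ mod 2), i.e. horizontal strips of width √3/2, each strip closed on its lower side and open on its upper side, with alternating colors. Then for any three points a, b, d ∈ ℝ² with ‖a − b‖ = ‖b − d‖ = ‖a − d‖ = 1 (a unit equilateral triangle), it is not the case that c(a) = c(b) = c(d). -/

import Mathlib

open MeasureTheory Real

noncomputable section

abbrev Plane := EuclideanSpace ℝ (Fin 2)

def vec (x y : ℝ) : Plane := (WithLp.equiv 2 (Fin 2 → ℝ)).symm ![x, y]

open scoped Fin.IntCast in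
/-- The parallel-stripes 2-coloring: horizontal strips of width `√3/2`, closed below and
open above, with alternating colors; the color of `(x, y)` is `⌊y/(√3/2)⌋ mod 2`. -/
def stripes : Plane → Fin 2 := fun x => ((⌊x 1 / (Real.sqrt 3 / 2)⌋ : ℤ) : Fin 2)

set_option maxHeartbeats 1000000 in
private theorem stripes_lemB (x1 x2 x3 y1 y2 y3 : ℝ)
    (e1 : (x1-x2)^2+(y1-y2)^2 = 1) (e2 : (x2-x3)^2+(y2-y3)^2 = 1)
    (e3 : (x1-x3)^2+(y1-y3)^2 = 1)
    (h12 : (y1-y2)^2 > 3/4) (h13 : (y1-y3)^2 > 3/4) : False := by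
  obtain ⟨u, hu⟩ : ∃ u, u = x1 - x2 := ⟨_, rfl⟩
  obtain ⟨v, hv⟩ : ∃ v, v = x1 - x3 := ⟨_, rfl⟩
  obtain ⟨p, hp⟩ : ∃ p, p = y1 - y2 := ⟨_, rfl⟩
  obtain ⟨q, hq⟩ : ∃ q, q = y1 - y3 := ⟨_, rfl⟩
  have E1 : u^2 + p^2 = 1 := by rw [hu, hp]; linarith [e1]
  have E3 : v^2 + q^2 = 1 := by rw [hv, hq]; linarith [e3]
  have key : u*v + p*q = 1/2 := by
    rw [hu, hv, hp, hq]; linear_combination (e1 + e3 - e2)/2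
  have hp2 : p^2 > 3/4 := by rw [hp]; exact h12
  have hq2 : q^2 > 3/4 := by rw [hq]; exact h13
  clear e1 e2 e3 hu hv hp hq h12 h13
  have hu2 : u^2 < 1/4 := by nlinarith
  have hv2 : v^2 < 1/4 := by nlinarith
  have h1 : (u*v)^2 < (1/4)^2 := by nlinarith [sq_nonneg u, sq_nonneg v]
  have h1' : |u*v| < 1/4 := abs_lt_of_sq_lt_sq h1 (by norm_num)
  rw [abs_lt] at h1'
  have h2 : p*q > 1/4 := by linarith [h1'.2]
  have h3 : p*q < 3/4 := by linarith [h1'.1]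
  have h4 : (p*q)^2 > 9/16 := by
    nlinarith [mul_pos (by linarith : p^2 - 3/4 > 0) (by linarith : q^2 - 3/4 > 0)]
  nlinarith [h2, h3, h4]

set_option maxHeartbeats 1000000 in
private theorem stripes_lemA (x1 x2 x3 y1 y2 y3 : ℝ)
    (e1 : (x1-x2)^2+(y1-y2)^2 = 1) (e2 : (x2-x3)^2+(y2-y3)^2 = 1)
    (e3 : (x1-x3)^2+(y1-y3)^2 = 1)
    (h12 : (y1-y2)^2 < 3/4) (h13 : (y1-y3)^2 < 3/4) (h23 : (y2-y3)^2 < 3/4) : False := by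
  obtain ⟨u, hu⟩ : ∃ u, u = x1 - x2 := ⟨_, rfl⟩
  obtain ⟨v, hv⟩ : ∃ v, v = x1 - x3 := ⟨_, rfl⟩
  have E1 : u^2 > 1/4 := by rw [hu]; nlinarith [e1]
  have E3 : v^2 > 1/4 := by rw [hv]; nlinarith [e3]
  have hsum : u^2 + v^2 = 3/4 + u*v := by
    rw [hu, hv]; nlinarith [e1, e2, e3, h23]
  have hd : (u - v)^2 > 1/4 := by rw [hu, hv]; nlinarith [e2]
  clear e1 e2 e3 hu hv h12 h13 h23
  have hlt : u*v < 1/2 := by nlinarith [hd, hsum]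
  have hge : u*v ≥ -(1/4) := by nlinarith [sq_nonneg (u+v), hsum]
  nlinarith [mul_pos (by linarith : u^2 - 1/4 > 0) (by linarith : v^2 - 1/4 > 0),
    mul_nonneg (by linarith : 1/2 - u*v ≥ 0) (by linarith : u*v + 1/4 ≥ 0), hsum]

private theorem stripes_hsq : (Real.sqrt 3 / 2)^2 = 3/4 := by
  rw [div_pow, Real.sq_sqrt (by norm_num : (3:ℝ) ≥ 0)]; norm_num

private theorem stripes_bnd (y : ℝ) :
    (⌊y / (Real.sqrt 3 / 2)⌋ : ℝ) * (Real.sqrt 3 / 2) ≤ y ∧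
    y < ((⌊y / (Real.sqrt 3 / 2)⌋ : ℝ) + 1) * (Real.sqrt 3 / 2) := by
  have hpos : 0 < Real.sqrt 3 / 2 := by positivity
  constructor
  · calc (⌊y / (Real.sqrt 3 / 2)⌋ : ℝ) * (Real.sqrt 3 / 2)
        ≤ (y / (Real.sqrt 3 / 2)) * (Real.sqrt 3 / 2) :=
          mul_le_mul_of_nonneg_right (Int.floor_le _) hpos.le
      _ = y := by field_simp
  · calc y = (y / (Real.sqrt 3 / 2)) * (Real.sqrt 3 / 2) := by field_simp
      _ < ((⌊y / (Real.sqrt 3 / 2)⌋ : ℝ) + 1) * (Real.sqrt 3 / 2) :=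
          mul_lt_mul_of_pos_right (Int.lt_floor_add_one _) hpos

private theorem stripes_ibnd (y y' : ℝ) (n n' : ℤ)
    (ln : (n:ℝ) * (Real.sqrt 3 / 2) ≤ y) (un' : y' < ((n':ℝ) + 1) * (Real.sqrt 3 / 2))
    (dd : (y - y')^2 ≤ 1) : n - n' ≤ 2 := by
  have hpos : 0 < Real.sqrt 3 / 2 := by positivity
  have hh := stripes_hsq
  by_contra hc
  push_neg at hc
  have h3r : (3:ℝ) ≤ (n:ℝ) - n' := by exact_mod_cast hc
  have hgap : y - y' > 2 * (Real.sqrt 3 / 2) := by nlinarith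
  nlinarith

private theorem stripes_gap (y y' : ℝ) (n n' : ℤ) (he : n = n' + 2)
    (ln : (n:ℝ) * (Real.sqrt 3 / 2) ≤ y) (un' : y' < ((n':ℝ) + 1) * (Real.sqrt 3 / 2)) :
    (y - y')^2 > 3/4 ∧ (y' - y)^2 > 3/4 := by
  have hpos : 0 < Real.sqrt 3 / 2 := by positivity
  have hh := stripes_hsq
  have hnr : (n:ℝ) = (n':ℝ) + 2 := by exact_mod_cast he
  rw [hnr] at ln
  constructor <;> nlinarith

private theorem stripes_near (y y' : ℝ) (n : ℤ)
    (ln : (n:ℝ) * (Real.sqrt 3 / 2) ≤ y) (un : y < ((n:ℝ) + 1) * (Real.sqrt 3 / 2))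
    (ln' : (n:ℝ) * (Real.sqrt 3 / 2) ≤ y') (un' : y' < ((n:ℝ) + 1) * (Real.sqrt 3 / 2)) :
    (y - y')^2 < 3/4 := by
  have hpos : 0 < Real.sqrt 3 / 2 := by positivity
  have hh := stripes_hsq
  nlinarith

private theorem stripes_dsq (u v : Plane) (huv : dist u v = 1) :
    (u 0 - v 0)^2 + (u 1 - v 1)^2 = 1 := by
  rw [EuclideanSpace.dist_eq] at huv
  have h1 := Real.sqrt_eq_one.mp (by simpa [Fin.sum_univ_two, Real.dist_eq] using huv)
  linarith [h1]

/-- No unit equilateral triangle is monochromatic for the stripes coloring. -/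
theorem stmt10 (a b d : Plane)
    (hab : dist a b = 1) (hbd : dist b d = 1) (had : dist a d = 1) :
    ¬ (stripes a = stripes b ∧ stripes b = stripes d) := by
  rintro ⟨h1, h2⟩
  have e1 := stripes_dsq a b hab
  have e2 := stripes_dsq b d hbd
  have e3 := stripes_dsq a d had
  set n1 : ℤ := ⌊a 1 / (Real.sqrt 3 / 2)⌋ with hn1
  set n2 : ℤ := ⌊b 1 / (Real.sqrt 3 / 2)⌋ with hn2
  set n3 : ℤ := ⌊d 1 / (Real.sqrt 3 / 2)⌋ with hn3
  have p12 : (2:ℤ) ∣ n2 - n1 := by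
    have : ((n1:ℤ) : ZMod 2) = (n2 : ZMod 2) := h1
    exact (ZMod.intCast_eq_intCast_iff n1 n2 2).mp this |>.dvd
  have p23 : (2:ℤ) ∣ n3 - n2 := by
    have : ((n2:ℤ) : ZMod 2) = (n3 : ZMod 2) := h2
    exact (ZMod.intCast_eq_intCast_iff n2 n3 2).mp this |>.dvd
  obtain ⟨l1, u1⟩ := stripes_bnd (a 1)
  obtain ⟨l2, u2⟩ := stripes_bnd (b 1)
  obtain ⟨l3, u3⟩ := stripes_bnd (d 1)
  rw [← hn1] at l1 u1
  rw [← hn2] at l2 u2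
  rw [← hn3] at l3 u3
  have dy : ∀ y y' x x' : ℝ, (x - x')^2 + (y - y')^2 = 1 → (y - y')^2 ≤ 1 := by
    intro y y' x x' e; nlinarith [sq_nonneg (x - x')]
  have d12 := dy _ _ _ _ e1
  have d23 := dy _ _ _ _ e2
  have d13 := dy _ _ _ _ e3
  have d21 : ((b 1) - (a 1))^2 ≤ 1 := by nlinarith [d12]
  have d32 : ((d 1) - (b 1))^2 ≤ 1 := by nlinarith [d23]
  have d31 : ((d 1) - (a 1))^2 ≤ 1 := by nlinarith [d13]
  have b12 := stripes_ibnd _ _ _ _ l1 u2 d12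
  have b21 := stripes_ibnd _ _ _ _ l2 u1 d21
  have b23 := stripes_ibnd _ _ _ _ l2 u3 d23
  have b32 := stripes_ibnd _ _ _ _ l3 u2 d32
  have b13 := stripes_ibnd _ _ _ _ l1 u3 d13
  have b31 := stripes_ibnd _ _ _ _ l3 u1 d31
  have c12 : n1 = n2 - 2 ∨ n1 = n2 ∨ n1 = n2 + 2 := by omega
  have c23 : n2 = n3 - 2 ∨ n2 = n3 ∨ n2 = n3 + 2 := by omega
  rcases c12 with hA | hA | hA <;> rcases c23 with hB | hB | hB
  · omega
  · -- n2 = n1 + 2, n3 = n2: b, d high, a low: apex a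
    have g1 := stripes_gap _ _ n2 n1 (by omega) l2 u1
    have g2 := stripes_gap _ _ n3 n1 (by omega) l3 u1
    exact stripes_lemB (a 0) (b 0) (d 0) (a 1) (b 1) (d 1) e1 e2 e3 g1.2 g2.2
  · -- n2 = n1 + 2 = n3 + 2: apex b
    have g1 := stripes_gap _ _ n2 n1 (by omega) l2 u1
    have g2 := stripes_gap _ _ n2 n3 (by omega) l2 u3
    exact stripes_lemB (b 0) (a 0) (d 0) (b 1) (a 1) (d 1)
      (by linear_combination e1) (by linear_combination e3) (by linear_combination e2)
      g1.1 g2.1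
  · -- n1 = n2, n3 = n2 + 2: apex d
    have g1 := stripes_gap _ _ n3 n1 (by omega) l3 u1
    have g2 := stripes_gap _ _ n3 n2 (by omega) l3 u2
    exact stripes_lemB (d 0) (a 0) (b 0) (d 1) (a 1) (b 1)
      (by linear_combination e3) (by linear_combination e1) (by linear_combination e2)
      g1.1 g2.1
  · -- all equal: lemA
    have q12 := stripes_near _ _ n1 l1 u1 (hA ▸ l2) (hA ▸ u2)
    have q13 := stripes_near _ _ n1 l1 u1 ((hA.trans hB) ▸ l3) ((hA.trans hB) ▸ u3)
    have q23 := stripes_near _ _ n2 l2 u2 (hB ▸ l3) (hB ▸ u3)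
    exact stripes_lemA (a 0) (b 0) (d 0) (a 1) (b 1) (d 1) e1 e2 e3 q12 q13 q23
  · -- n1 = n2, n2 = n3 + 2: a, b high, d low: apex d
    have g1 := stripes_gap _ _ n1 n3 (by omega) l1 u3
    have g2 := stripes_gap _ _ n2 n3 (by omega) l2 u3
    exact stripes_lemB (d 0) (a 0) (b 0) (d 1) (a 1) (b 1)
      (by linear_combination e3) (by linear_combination e1) (by linear_combination e2)
      g1.2 g2.2
  · -- n1 = n2 + 2, n3 = n2 + 2: a, d high, b low: apex b
    have g1 := stripes_gap _ _ n1 n2 (by omega) l1 u2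
    have g2 := stripes_gap _ _ n3 n2 (by omega) l3 u2
    exact stripes_lemB (b 0) (a 0) (d 0) (b 1) (a 1) (d 1)
      (by linear_combination e1) (by linear_combination e3) (by linear_combination e2)
      g1.2 g2.2
  · -- n1 = n2 + 2, n3 = n2: apex a
    have g1 := stripes_gap _ _ n1 n2 (by omega) l1 u2
    have g2 := stripes_gap _ _ n1 n3 (by omega) l1 u3
    exact stripes_lemB (a 0) (b 0) (d 0) (a 1) (b 1) (d 1) e1 e2 e3 g1.1 g2.1
  · omega

end
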